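/- Dual weight increment identity: let w be weights on the rectangle R = {z : u ≤ z ≤ v} and define dual weights w*_x for x ∈ R by: w*_x = min(Î_{u,x+e1}(w), Ĵ_{u,x+e2}(w)) if x ≤ v − e1 − e2; w*_x = Î_{u,x+e1}(w) if x·e2 = v·e2 and x < v; w*_x = Ĵ_{u,x+e2}(w) if x·e1 = v·e1 and x < v; and w*_v = 0. Then for x ∈ R with x + e1 ≤ v, I_{x,v}(w*) = Î_{u,x+e1}(w), and for x ∈ R with x + e2 ≤ v, J_{x,v}(w*) = Ĵ_{u,x+e2}(w). -/

import Mathlib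

open scoped BigOperators

/-- An up-right path of length `n` in `ℤ²`: each step is `e1 = (1,0)` or `e2 = (0,1)`. -/
def IsUpRight (n : ℕ) (π : ℕ → ℤ × ℤ) : Prop :=
  ∀ i < n, π (i + 1) = π i + (1, 0) ∨ π (i + 1) = π i + (0, 1)

/-- The last-passage time `L_{x,y}(w)`: the supremum (a maximum over the finitely many
up-right paths from `x` to `y`, including both endpoints) of the path weight sums,
with value `⊥ = -∞` when `x ≤ y` fails (empty set of paths). -/
noncomputable def lpp (w : ℤ × ℤ → ℝ) (x y : ℤ × ℤ) : EReal :=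
  sSup {s : EReal | ∃ n : ℕ, ∃ π : ℕ → ℤ × ℤ,
    π 0 = x ∧ π n = y ∧ IsUpRight n π ∧
    s = ((∑ i ∈ Finset.range (n + 1), w (π i) : ℝ) : EReal)}

/-- Increment with respect to the initial point: `I_{x,y} = L_{x,y} - L_{x+e1,y}`. -/
noncomputable def incI (w : ℤ × ℤ → ℝ) (x y : ℤ × ℤ) : EReal :=
  lpp w x y - lpp w (x + (1, 0)) y

/-- Increment with respect to the initial point: `J_{x,y} = L_{x,y} - L_{x+e2,y}`. -/
noncomputable def incJ (w : ℤ × ℤ → ℝ) (x y : ℤ × ℤ) : EReal :=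
  lpp w x y - lpp w (x + (0, 1)) y

/-- Increment with respect to the terminal point: `Î_{x,y} = L_{x,y} - L_{x,y-e1}`. -/
noncomputable def incIhat (w : ℤ × ℤ → ℝ) (x y : ℤ × ℤ) : EReal :=
  lpp w x y - lpp w x (y - (1, 0))

/-- Increment with respect to the terminal point: `Ĵ_{x,y} = L_{x,y} - L_{x,y-e2}`. -/
noncomputable def incJhat (w : ℤ × ℤ → ℝ) (x y : ℤ × ℤ) : EReal :=
  lpp w x y - lpp w x (y - (0, 1))

/-- Real-valued terminal-point increments (the `EReal` increments are real in the cases used). -/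
noncomputable def incIhatR (w : ℤ × ℤ → ℝ) (x y : ℤ × ℤ) : ℝ := (incIhat w x y).toReal

noncomputable def incJhatR (w : ℤ × ℤ → ℝ) (x y : ℤ × ℤ) : ℝ := (incJhat w x y).toReal

/-- The dual weights `w*` on the rectangle with corners `u ≤ v`:
`w*_x = Î_{u,x+e1} ∧ Ĵ_{u,x+e2}` in the interior, `w*_x = Î_{u,x+e1}` on the north edge,
`w*_x = Ĵ_{u,x+e2}` on the east edge, and `w*_v = 0`. -/
noncomputable def dualWt (w : ℤ × ℤ → ℝ) (u v : ℤ × ℤ) (x : ℤ × ℤ) : ℝ :=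
  if x = v then 0
  else if x.2 = v.2 then incIhatR w u (x + (1, 0))
  else if x.1 = v.1 then incJhatR w u (x + (0, 1))
  else min (incIhatR w u (x + (1, 0))) (incJhatR w u (x + (0, 1)))

/-- The set of path weights from `x` to `y`. -/
def pathSet (w : ℤ × ℤ → ℝ) (x y : ℤ × ℤ) : Set EReal :=
  {s : EReal | ∃ n : ℕ, ∃ π : ℕ → ℤ × ℤ,
    π 0 = x ∧ π n = y ∧ IsUpRight n π ∧
    s = ((∑ i ∈ Finset.range (n + 1), w (π i) : ℝ) : EReal)}

lemma lpp_eq_sSup (w : ℤ × ℤ → ℝ) (x y : ℤ × ℤ) : lpp w x y = sSup (pathSet w x y) := rfl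

lemma upRight_facts {n : ℕ} {π : ℕ → ℤ × ℤ} (h : IsUpRight n π) :
    ∀ i ≤ n, π 0 ≤ π i ∧ (π i).1 + (π i).2 = (π 0).1 + (π 0).2 + i := by
  intro i hi
  induction i with
  | zero => simp
  | succ j ih =>
    obtain ⟨h1, h2⟩ := ih (by omega)
    rcases h j (by omega) with hs | hs <;>
    · rw [hs]
      refine ⟨le_trans h1 ?_, ?_⟩
      · simp [Prod.le_def]
      · simp [Prod.fst_add, Prod.snd_add]; push_cast; omega

lemma pathSet_empty {w : ℤ × ℤ → ℝ} {x y : ℤ × ℤ} (h : ¬ x ≤ y) : pathSet w x y = ∅ := by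
  ext s
  simp only [pathSet, Set.mem_setOf_eq, Set.mem_empty_iff_false, iff_false]
  rintro ⟨n, π, h0, hn, hur, -⟩
  exact h (h0 ▸ hn ▸ (upRight_facts hur n le_rfl).1)

lemma pathSet_self (w : ℤ × ℤ → ℝ) (x : ℤ × ℤ) :
    pathSet w x x = {((w x : ℝ) : EReal)} := by
  ext s
  simp only [pathSet, Set.mem_setOf_eq, Set.mem_singleton_iff]
  constructor
  · rintro ⟨n, π, h0, hn, hur, hs⟩
    have := (upRight_facts hur n le_rfl).2
    rw [hn, h0] at this
    have hn0 : n = 0 := by omega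
    subst hn0
    simpa [h0] using hs
  · rintro rfl
    exact ⟨0, fun _ => x, rfl, rfl, fun i hi => by omega, by simp⟩

lemma pathSet_nonempty {w : ℤ × ℤ → ℝ} {x y : ℤ × ℤ} (h : x ≤ y) :
    (pathSet w x y).Nonempty := by
  obtain ⟨h1, h2⟩ := Prod.le_def.1 h
  obtain ⟨n, hn⟩ : ∃ n : ℕ, (n : ℤ) = (y.1 - x.1) + (y.2 - x.2) :=
    ⟨((y.1 - x.1) + (y.2 - x.2)).toNat, by omega⟩
  set π : ℕ → ℤ × ℤ := fun i =>
    if (i : ℤ) ≤ y.1 - x.1 then (x.1 + i, x.2) else (y.1, x.2 + ((i : ℤ) - (y.1 - x.1)))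
    with hπ
  refine ⟨_, n, π, ?_, ?_, ?_, rfl⟩
  · simp only [hπ, Nat.cast_zero]
    rw [if_pos (by omega)]
    ext <;> simp
  · simp only [hπ]
    split_ifs with hc
    · ext <;> simp <;> omega
    · ext <;> simp <;> omega
  · intro i hi
    have hi' : (i : ℤ) < (n : ℤ) := by exact_mod_cast hi
    simp only [hπ]
    push_cast
    split_ifs with h3 h4 h4
    · left; ext <;> simp <;> omega
    · exfalso; omega
    · right; ext <;> simp <;> omega
    · right; ext <;> simp <;> omega

lemma pathSet_rec {w : ℤ × ℤ → ℝ} {x y : ℤ × ℤ} (hne : x ≠ y) :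
    pathSet w x y =
      (fun s => s + ((w x : ℝ) : EReal)) ''
        (pathSet w (x + (1, 0)) y ∪ pathSet w (x + (0, 1)) y) := by
  ext s
  simp only [pathSet, Set.mem_setOf_eq, Set.mem_image, Set.mem_union]
  constructor
  · rintro ⟨n, π, h0, hn, hur, rfl⟩
    obtain ⟨m, rfl⟩ : ∃ m, n = m + 1 := by
      rcases n with _ | m
      · exact absurd (h0 ▸ hn) hne
      · exact ⟨m, rfl⟩
    refine ⟨((∑ i ∈ Finset.range (m + 1), w (π (i + 1)) : ℝ) : EReal), ?_, ?_⟩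
    · have hur' : IsUpRight m (fun i => π (i + 1)) := fun i hi => hur (i + 1) (by omega)
      rcases hur 0 (by omega) with hs | hs
      · left; exact ⟨m, fun i => π (i + 1), by simpa [h0] using hs, hn, hur', rfl⟩
      · right; exact ⟨m, fun i => π (i + 1), by simpa [h0] using hs, hn, hur', rfl⟩
    · rw [← EReal.coe_add, EReal.coe_eq_coe_iff]
      rw [Finset.sum_range_succ' (fun i => w (π i)) (m + 1), h0]
  · rintro ⟨s', hs', rfl⟩
    have : ∃ x', (x' = x + (1, 0) ∨ x' = x + (0, 1)) ∧ s' ∈ pathSet w x' y := by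
      rcases hs' with hs' | hs'
      · exact ⟨_, Or.inl rfl, hs'⟩
      · exact ⟨_, Or.inr rfl, hs'⟩
    obtain ⟨x', hx', m, π', h0', hn', hur', rfl⟩ := this
    refine ⟨m + 1, fun i => Nat.casesOn i x π', rfl, hn', ?_, ?_⟩
    · intro i hi
      rcases i with _ | j
      · show π' 0 = x + _ ∨ π' 0 = x + _
        rcases hx' with h | h
        · left; rw [h0', h]
        · right; rw [h0', h]
      · exact hur' j (by omega)
    · rw [← EReal.coe_add, EReal.coe_eq_coe_iff]
      rw [Finset.sum_range_succ' (fun i => w (Nat.casesOn i x π')) (m + 1)]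
      exact congrArg₂ _ (Finset.sum_congr rfl fun i _ => rfl) rfl

/-- Adding a real constant is an order isomorphism of `EReal`. -/
noncomputable def addRealIso (c : ℝ) : EReal ≃o EReal where
  toFun a := a + (c : EReal)
  invFun a := a - (c : EReal)
  left_inv a := EReal.add_sub_cancel_right
  right_inv a := EReal.sub_add_cancel
  map_rel_iff' := (EReal.addLECancellable_coe c).add_le_add_iff_right

lemma sSup_add_real (c : ℝ) (T : Set EReal) :
    sSup ((fun s => s + (c : EReal)) '' T) = sSup T + (c : EReal) := by
  rw [sSup_image]
  exact ((addRealIso c).map_sSup T).symm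

/-- Recursive last-passage value with fuel `n`. -/
noncomputable def go (w : ℤ × ℤ → ℝ) : ℕ → ℤ × ℤ → ℤ × ℤ → ℝ
  | 0, x, _ => w x
  | n + 1, x, y => w x +
      (if x.1 < y.1 then
        (if x.2 < y.2 then max (go w n (x + (1, 0)) y) (go w n (x + (0, 1)) y)
         else go w n (x + (1, 0)) y)
       else go w n (x + (0, 1)) y)

lemma lpp_eq_go (w : ℤ × ℤ → ℝ) :
    ∀ n : ℕ, ∀ x y : ℤ × ℤ, x ≤ y → (y.1 - x.1) + (y.2 - x.2) = (n : ℤ) →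
      lpp w x y = ((go w n x y : ℝ) : EReal) := by
  intro n
  induction n with
  | zero =>
    intro x y hxy hgap
    obtain ⟨h1, h2⟩ := Prod.le_def.1 hxy
    have : x = y := Prod.ext (by omega) (by omega)
    subst this
    rw [lpp_eq_sSup, pathSet_self, csSup_singleton]
    rfl
  | succ n ih =>
    intro x y hxy hgap
    obtain ⟨h1, h2⟩ := Prod.le_def.1 hxy
    have hne : x ≠ y := by
      intro h; subst h; omega
    rw [lpp_eq_sSup, pathSet_rec hne, sSup_add_real, sSup_union]
    rcases eq_or_lt_of_le h1 with he1 | hl1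
    · -- x.1 = y.1, so x.2 < y.2, only e2 step
      have hl2 : x.2 < y.2 := by
        rcases eq_or_lt_of_le h2 with he2 | hl2
        · exact absurd (Prod.ext he1 he2) hne
        · exact hl2
      have hemp : pathSet w (x + (1, 0)) y = ∅ :=
        pathSet_empty (by simp [Prod.le_def]; omega)
      have hs2 : lpp w (x + (0, 1)) y = ((go w n (x + (0, 1)) y : ℝ) : EReal) :=
        ih _ _ (by simp [Prod.le_def]; omega) (by simp; omega)
      rw [hemp, sSup_empty, ← lpp_eq_sSup, hs2, bot_sup_eq]
      rw [show go w (n+1) x y = w x + go w n (x + (0,1)) y by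
        simp [go, not_lt.2 (le_of_eq he1.symm)]]
      rw [← EReal.coe_add]
      rw [EReal.coe_eq_coe_iff]
      ring
    · rcases eq_or_lt_of_le h2 with he2 | hl2
      · -- x.2 = y.2, only e1 step
        have hemp : pathSet w (x + (0, 1)) y = ∅ :=
          pathSet_empty (by simp [Prod.le_def]; omega)
        have hs1 : lpp w (x + (1, 0)) y = ((go w n (x + (1, 0)) y : ℝ) : EReal) :=
          ih _ _ (by simp [Prod.le_def]; omega) (by simp; omega)
        rw [hemp, sSup_empty, ← lpp_eq_sSup, hs1, sup_bot_eq]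
        rw [show go w (n+1) x y = w x + go w n (x + (1,0)) y by
          simp [go, hl1, not_lt.2 (le_of_eq he2.symm)]]
        rw [← EReal.coe_add, EReal.coe_eq_coe_iff]
        ring
      · -- interior
        have hs1 : lpp w (x + (1, 0)) y = ((go w n (x + (1, 0)) y : ℝ) : EReal) :=
          ih _ _ (by simp [Prod.le_def]; omega) (by simp; omega)
        have hs2 : lpp w (x + (0, 1)) y = ((go w n (x + (0, 1)) y : ℝ) : EReal) :=
          ih _ _ (by simp [Prod.le_def]; omega) (by simp; omega)
        rw [← lpp_eq_sSup, ← lpp_eq_sSup, hs1, hs2]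
        rw [show go w (n+1) x y = w x + max (go w n (x + (1,0)) y) (go w n (x + (0,1)) y) by
          simp [go, hl1, hl2]]
        rw [← EReal.coe_strictMono.monotone.map_max, ← EReal.coe_add, EReal.coe_eq_coe_iff]
        ring

/-- Real-valued last-passage time (valid for `x ≤ y`). -/
noncomputable def lppR (w : ℤ × ℤ → ℝ) (x y : ℤ × ℤ) : ℝ :=
  go w ((y.1 - x.1) + (y.2 - x.2)).toNat x y

lemma lpp_coe {w : ℤ × ℤ → ℝ} {x y : ℤ × ℤ} (h : x ≤ y) :
    lpp w x y = ((lppR w x y : ℝ) : EReal) := by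
  obtain ⟨h1, h2⟩ := Prod.le_def.1 h
  exact lpp_eq_go w _ x y h (by omega)

lemma lppR_self (w : ℤ × ℤ → ℝ) (x : ℤ × ℤ) : lppR w x x = w x := by
  simp [lppR, go]

lemma lppR_rec {w : ℤ × ℤ → ℝ} {x y : ℤ × ℤ} (h : x ≤ y) (hne : x ≠ y) :
    lppR w x y = w x +
      (if x.1 < y.1 then
        (if x.2 < y.2 then max (lppR w (x + (1, 0)) y) (lppR w (x + (0, 1)) y)
         else lppR w (x + (1, 0)) y)
       else lppR w (x + (0, 1)) y) := by
  obtain ⟨h1, h2⟩ := Prod.le_def.1 h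
  obtain ⟨n, hn⟩ : ∃ n : ℕ, ((y.1 - x.1) + (y.2 - x.2)).toNat = n + 1 := by
    refine ⟨((y.1 - x.1) + (y.2 - x.2)).toNat - 1, ?_⟩
    have : x.1 ≠ y.1 ∨ x.2 ≠ y.2 := by
      by_contra hc
      push_neg at hc
      exact hne (Prod.ext hc.1 hc.2)
    omega
  rw [lppR, hn]
  show w x + _ = w x + _
  congr 1
  rcases lt_or_ge x.1 y.1 with hl1 | hl1
  · rcases lt_or_ge x.2 y.2 with hl2 | hl2
    · rw [if_pos hl1, if_pos hl1, if_pos hl2, if_pos hl2]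
      have e1 : (y.1 - (x + (1,0)).1 + (y.2 - (x + (1,0)).2)).toNat = n := by simp; omega
      have e2 : (y.1 - (x + (0,1)).1 + (y.2 - (x + (0,1)).2)).toNat = n := by simp; omega
      rw [lppR, lppR, e1, e2]
    · rw [if_pos hl1, if_pos hl1, if_neg (not_lt.2 hl2), if_neg (not_lt.2 hl2)]
      have e1 : (y.1 - (x + (1,0)).1 + (y.2 - (x + (1,0)).2)).toNat = n := by simp; omega
      rw [lppR, e1]
  · rw [if_neg (not_lt.2 hl1), if_neg (not_lt.2 hl1)]
    have hl2 : x.2 < y.2 := by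
      rcases eq_or_lt_of_le h2 with he | hl
      · exact absurd (Prod.ext (le_antisymm h1 hl1) he) hne
      · exact hl
    have e2 : (y.1 - (x + (0,1)).1 + (y.2 - (x + (0,1)).2)).toNat = n := by simp; omega
    rw [lppR, e2]

lemma incIhatR_eq {w : ℤ × ℤ → ℝ} {u x : ℤ × ℤ} (hux : u ≤ x) :
    incIhatR w u (x + (1, 0)) = lppR w u (x + (1, 0)) - lppR w u x := by
  have h1 : u ≤ x + (1, 0) := le_trans hux (by simp [Prod.le_def])
  have h2 : x + (1, 0) - (1, 0) = x := add_sub_cancel_right x (1, 0)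
  rw [incIhatR, incIhat, h2, lpp_coe h1, lpp_coe hux, ← EReal.coe_sub, EReal.toReal_coe]

lemma incJhatR_eq {w : ℤ × ℤ → ℝ} {u x : ℤ × ℤ} (hux : u ≤ x) :
    incJhatR w u (x + (0, 1)) = lppR w u (x + (0, 1)) - lppR w u x := by
  have h1 : u ≤ x + (0, 1) := le_trans hux (by simp [Prod.le_def])
  have h2 : x + (0, 1) - (0, 1) = x := add_sub_cancel_right x (0, 1)
  rw [incJhatR, incJhat, h2, lpp_coe h1, lpp_coe hux, ← EReal.coe_sub, EReal.toReal_coe]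

lemma dual_key (w : ℤ × ℤ → ℝ) (u v : ℤ × ℤ) :
    ∀ n : ℕ, ∀ x : ℤ × ℤ, u ≤ x → x ≤ v → ((v.1 - x.1) + (v.2 - x.2)).toNat = n →
      lppR (dualWt w u v) x v = lppR w u v - lppR w u x := by
  intro n
  induction n with
  | zero =>
    intro x hux hxv hgap
    obtain ⟨h1, h2⟩ := Prod.le_def.1 hxv
    have hxv' : x = v := Prod.ext (by omega) (by omega)
    subst hxv'
    rw [lppR_self, dualWt, if_pos rfl]
    ring
  | succ n ih =>
    intro x hux hxv hgap
    obtain ⟨h1, h2⟩ := Prod.le_def.1 hxv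
    have hne : x ≠ v := by
      intro h; subst h; omega
    have hne' : x.1 ≠ v.1 ∨ x.2 ≠ v.2 := by
      by_contra hc; push_neg at hc; exact hne (Prod.ext hc.1 hc.2)
    rw [lppR_rec hxv hne]
    rcases lt_or_ge x.1 v.1 with hl1 | hl1
    · rcases lt_or_ge x.2 v.2 with hl2 | hl2
      · -- interior
        have hx1 : x + (1, 0) ≤ v := by simp [Prod.le_def]; omega
        have hx2 : x + (0, 1) ≤ v := by simp [Prod.le_def]; omega
        have hu1 : u ≤ x + (1, 0) := le_trans hux (by simp [Prod.le_def])
        have hu2 : u ≤ x + (0, 1) := le_trans hux (by simp [Prod.le_def])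
        have g1 := ih (x + (1, 0)) hu1 hx1 (by simp; omega)
        have g2 := ih (x + (0, 1)) hu2 hx2 (by simp; omega)
        rw [if_pos hl1, if_pos hl2, g1, g2]
        have hwx : dualWt w u v x =
            min (lppR w u (x + (1, 0)) - lppR w u x) (lppR w u (x + (0, 1)) - lppR w u x) := by
          rw [dualWt, if_neg hne, if_neg (by omega : ¬ x.2 = v.2), if_neg (by omega : ¬ x.1 = v.1),
            incIhatR_eq hux, incJhatR_eq hux]
        rw [hwx, min_sub_sub_right, max_sub_sub_left]
        ring
      · -- north edge : x.2 = v.2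
        have he2 : x.2 = v.2 := le_antisymm h2 hl2
        have hx1 : x + (1, 0) ≤ v := by simp [Prod.le_def]; omega
        have hu1 : u ≤ x + (1, 0) := le_trans hux (by simp [Prod.le_def])
        have g1 := ih (x + (1, 0)) hu1 hx1 (by simp; omega)
        rw [if_pos hl1, if_neg (not_lt.2 hl2), g1]
        have hwx : dualWt w u v x = lppR w u (x + (1, 0)) - lppR w u x := by
          rw [dualWt, if_neg hne, if_pos he2, incIhatR_eq hux]
        rw [hwx]
        ring
    · -- east edge : x.1 = v.1
      have he1 : x.1 = v.1 := le_antisymm h1 hl1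
      have hl2 : x.2 < v.2 := by omega
      have hx2 : x + (0, 1) ≤ v := by simp [Prod.le_def]; omega
      have hu2 : u ≤ x + (0, 1) := le_trans hux (by simp [Prod.le_def])
      have g2 := ih (x + (0, 1)) hu2 hx2 (by simp; omega)
      rw [if_neg (not_lt.2 hl1), g2]
      have hwx : dualWt w u v x = lppR w u (x + (0, 1)) - lppR w u x := by
        rw [dualWt, if_neg hne, if_neg (by omega : ¬ x.2 = v.2), if_pos he1,
          incJhatR_eq hux]
      rw [hwx]
      ring

lemma dual_lppR {w : ℤ × ℤ → ℝ} {u v x : ℤ × ℤ} (hux : u ≤ x) (hxv : x ≤ v) :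
    lppR (dualWt w u v) x v = lppR w u v - lppR w u x :=
  dual_key w u v _ x hux hxv rfl

/-- Dual weight increment identity: for `x` in the rectangle,
`I_{x,v}(w*) = Î_{u,x+e1}(w)` when `x + e1 ≤ v`, and
`J_{x,v}(w*) = Ĵ_{u,x+e2}(w)` when `x + e2 ≤ v`. -/
theorem stmt9 (w : ℤ × ℤ → ℝ) (u v : ℤ × ℤ) (huv : u ≤ v)
    (x : ℤ × ℤ) (hx : x ∈ Set.Icc u v) :
    (x + (1, 0) ≤ v → incI (dualWt w u v) x v = incIhat w u (x + (1, 0))) ∧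
    (x + (0, 1) ≤ v → incJ (dualWt w u v) x v = incJhat w u (x + (0, 1))) := by
  obtain ⟨hux, hxv⟩ := hx
  constructor
  · intro h1
    have hu1 : u ≤ x + (1, 0) := le_trans hux (by simp [Prod.le_def])
    have hc : x + (1, 0) - (1, 0) = x := add_sub_cancel_right x (1, 0)
    rw [incI, incIhat, hc, lpp_coe hxv, lpp_coe h1, lpp_coe hu1, lpp_coe hux,
      dual_lppR hux hxv, dual_lppR hu1 h1, ← EReal.coe_sub, ← EReal.coe_sub,
      EReal.coe_eq_coe_iff]
    ring
  · intro h2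
    have hu2 : u ≤ x + (0, 1) := le_trans hux (by simp [Prod.le_def])
    have hc : x + (0, 1) - (0, 1) = x := add_sub_cancel_right x (0, 1)
    rw [incJ, incJhat, hc, lpp_coe hxv, lpp_coe h2, lpp_coe hu2, lpp_coe hux,
      dual_lppR hux hxv, dual_lppR hu2 h2, ← EReal.coe_sub, ← EReal.coe_sub,
      EReal.coe_eq_coe_iff]
    ring
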